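/- (Sufficient-decrease inequality, (A.2) in the proof of Theorem 2.) Let k ∈ ℕ, let β ∈ ℝ^p satisfy ‖β‖₀ ≤ k, and let β⁺ be a minimizer of γ ↦ h(γ; β) over the set {γ ∈ ℝ^p : ‖γ‖₀ ≤ k}. Then ℓ(β) ≥ ℓ(β⁺) + (1/2)(ϑ − ρ₁μ/n)‖β⁺ − β‖₂². -/

import Mathlib

open scoped BigOperators RealInnerProductSpace

noncomputable section

/-- GLM negative log-likelihood `L(β) = (1/n) ∑ⱼ [b(Xⱼᵀβ) − yⱼ Xⱼᵀβ]`. -/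
def glmLoss {n p : ℕ} (X : Fin n → EuclideanSpace ℝ (Fin p)) (y : Fin n → ℝ)
    (b : ℝ → ℝ) (β : EuclideanSpace ℝ (Fin p)) : ℝ :=
  (1 / (n : ℝ)) * ∑ j, (b ⟪X j, β⟫ - y j * ⟪X j, β⟫)

/-- Surrogate loss `ℓ(β) = L(β) − βᵀv`. -/
def surrLoss {n p : ℕ} (X : Fin n → EuclideanSpace ℝ (Fin p)) (y : Fin n → ℝ)
    (b : ℝ → ℝ) (v : EuclideanSpace ℝ (Fin p)) (β : EuclideanSpace ℝ (Fin p)) : ℝ :=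
  glmLoss X y b β - ⟪β, v⟫

/-- Gradient of the surrogate loss:
`∇ℓ(β) = (1/n) ∑ⱼ (b'(Xⱼᵀβ) − yⱼ) Xⱼ − v`. -/
def surrGrad {n p : ℕ} (X : Fin n → EuclideanSpace ℝ (Fin p)) (y : Fin n → ℝ)
    (b : ℝ → ℝ) (v : EuclideanSpace ℝ (Fin p)) (β : EuclideanSpace ℝ (Fin p)) :
    EuclideanSpace ℝ (Fin p) :=
  (1 / (n : ℝ)) • (∑ j, (deriv b ⟪X j, β⟫ - y j) • X j) - v

/-- Quadratic approximation `h(γ; β) = ℓ(β) + ⟨γ − β, ∇ℓ(β)⟩ + (ϑ/2)‖γ − β‖₂²`. -/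
def quadApprox {n p : ℕ} (X : Fin n → EuclideanSpace ℝ (Fin p)) (y : Fin n → ℝ)
    (b : ℝ → ℝ) (v : EuclideanSpace ℝ (Fin p)) (ϑ : ℝ)
    (γ β : EuclideanSpace ℝ (Fin p)) : ℝ :=
  surrLoss X y b v β + ⟪γ - β, surrGrad X y b v β⟫ + ϑ / 2 * ‖γ - β‖ ^ 2

/-- The ℓ₀ "norm": number of nonzero coordinates. -/
def normZero {p : ℕ} (β : EuclideanSpace ℝ (Fin p)) : ℕ :=
  {j | β j ≠ 0}.ncard

open Matrix

lemma scalar_taylor (b : ℝ → ℝ) (μ : ℝ) (hb : ContDiff ℝ 2 b)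
    (hb'' : ∀ θ : ℝ, 0 ≤ deriv (deriv b) θ ∧ deriv (deriv b) θ ≤ μ)
    (s t : ℝ) : b t - b s - deriv b s * (t - s) ≤ μ / 2 * (t - s) ^ 2 := by
  have hbd : Differentiable ℝ b := hb.differentiable (by norm_num)
  have hb1 : ContDiff ℝ 1 (deriv b) := by
    have := (contDiff_succ_iff_deriv (n := 1)).mp (by exact_mod_cast hb)
    exact this.2.2
  have hbd' : Differentiable ℝ (deriv b) := hb1.differentiable (by norm_num)
  set g : ℝ → ℝ := fun u => μ / 2 * u ^ 2 - b u with hg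
  have hg' : deriv g = fun u => μ * u - deriv b u := by
    funext u
    have h1 : HasDerivAt (fun u : ℝ => μ / 2 * u ^ 2) (μ * u) u := by
      convert (hasDerivAt_pow 2 u).const_mul (μ / 2) using 1
      rfl
      rfl
      ring
    have := (h1.sub (hbd u).hasDerivAt).deriv
    exact this
  have hgd : Differentiable ℝ g := fun u =>
    (((differentiable_pow 2).const_mul (μ/2)).sub hbd) u
  have hgd' : Differentiable ℝ (deriv g) := by
    rw [hg']
    exact (differentiable_id.const_mul μ).sub hbd'
  have hconv : ConvexOn ℝ Set.univ g := by
    apply convexOn_univ_of_deriv2_nonneg hgd hgd'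
    intro x
    have : deriv (deriv g) x = μ - deriv (deriv b) x := by
      rw [hg']
      have h1 : HasDerivAt (fun u : ℝ => μ * u) μ x := by
        simpa using (hasDerivAt_id x).const_mul μ
      exact (h1.sub (hbd' x).hasDerivAt).deriv
    simp only [Function.iterate_succ, Function.iterate_zero, Function.comp_apply, id_eq]
    rw [this]
    linarith [(hb'' x).2]
  have key : g s + deriv g s * (t - s) ≤ g t := by
    rcases lt_trichotomy s t with h | h | h
    · have := hconv.deriv_le_slope (Set.mem_univ s) (Set.mem_univ t) h (hgd s)
      rw [slope_def_field] at this
      have ht : 0 < t - s := by linarith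
      have := (le_div_iff₀ ht).mp this
      linarith
    · simp [h]
    · have := hconv.slope_le_deriv (Set.mem_univ t) (Set.mem_univ s) h (hgd s)
      rw [slope_def_field] at this
      have ht : 0 < s - t := by linarith
      have := (div_le_iff₀ ht).mp this
      linarith
  have h2 : deriv g s = μ * s - deriv b s := by rw [hg']
  simp only [hg] at key
  rw [h2] at key
  nlinarith [key]

lemma quad_form_le {p : ℕ} (A : Matrix (Fin p) (Fin p) ℝ) (hA : A.IsHermitian)
    (ρ : ℝ) (hρ : ∀ i, hA.eigenvalues i ≤ ρ) (x : EuclideanSpace ℝ (Fin p)) :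
    ⇑x ⬝ᵥ (A *ᵥ ⇑x) ≤ ρ * ‖x‖ ^ 2 := by
  classical
  set B := hA.eigenvectorBasis with hB
  set y : EuclideanSpace ℝ (Fin p) := (WithLp.equiv 2 (Fin p → ℝ)).symm (A *ᵥ ⇑x) with hy
  have hAT : Aᵀ = A := by
    have := hA.eq
    rwa [Matrix.conjTranspose_eq_transpose_of_trivial] at this
  have hxy : ⟪x, y⟫ = ⇑x ⬝ᵥ (A *ᵥ ⇑x) := by
    simp [PiLp.inner_apply, RCLike.inner_apply, dotProduct, hy, mul_comm]
  have hBy : ∀ i, ⟪B i, y⟫ = hA.eigenvalues i * ⟪B i, x⟫ := by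
    intro i
    have h1 : A *ᵥ ⇑(B i) = hA.eigenvalues i • ⇑(B i) := hA.mulVec_eigenvectorBasis i
    have h2 : ⟪B i, y⟫ = ⇑(B i) ⬝ᵥ (A *ᵥ ⇑x) := by
      simp [PiLp.inner_apply, RCLike.inner_apply, dotProduct, hy, mul_comm]
    have hvm : ⇑(B i) ᵥ* A = A *ᵥ ⇑(B i) := by
      nth_rewrite 1 [← hAT]; rw [Matrix.vecMul_transpose]
    rw [h2, Matrix.dotProduct_mulVec, hvm, h1, smul_dotProduct]
    simp [PiLp.inner_apply, RCLike.inner_apply, dotProduct, mul_comm]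
  have hsum : ⟪x, y⟫ = ∑ i, ⟪x, B i⟫ * ⟪B i, y⟫ := (B.sum_inner_mul_inner x y).symm
  have hsum2 : ⟪x, x⟫ = ∑ i, ⟪x, B i⟫ * ⟪B i, x⟫ := (B.sum_inner_mul_inner x x).symm
  have hle : ⟪x, y⟫ ≤ ρ * ⟪x, x⟫ := by
    rw [hsum, hsum2, Finset.mul_sum]
    apply Finset.sum_le_sum
    intro i _
    rw [hBy i, real_inner_comm (B i) x]
    nlinarith [hρ i, mul_self_nonneg (⟪x, B i⟫ : ℝ)]
  rw [hxy] at hle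
  calc ⇑x ⬝ᵥ (A *ᵥ ⇑x) ≤ ρ * ⟪x, x⟫ := hle
  _ = ρ * ‖x‖ ^ 2 := by rw [real_inner_self_eq_norm_sq]

/-- Sufficient-decrease inequality (A.2) in the proof of Theorem 2:
`ℓ(β) ≥ ℓ(β⁺) + (1/2)(ϑ − ρ₁μ/n)‖β⁺ − β‖₂²`. -/
theorem surrLoss_sufficient_decrease
    {n p : ℕ} (hn : 0 < n)
    (X : Fin n → EuclideanSpace ℝ (Fin p)) (y : Fin n → ℝ)
    (b : ℝ → ℝ) (μ : ℝ) (hμ : 0 < μ) (hb : ContDiff ℝ 2 b)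
    (hb'' : ∀ θ : ℝ, 0 ≤ deriv (deriv b) θ ∧ deriv (deriv b) θ ≤ μ)
    (v : EuclideanSpace ℝ (Fin p))
    (ρ₁ : ℝ)
    (hρ₁ : IsGreatest
      (Set.range (show (Matrix.transpose (Matrix.of fun j i => X j i : Matrix (Fin n) (Fin p) ℝ) *
          (Matrix.of fun j i => X j i : Matrix (Fin n) (Fin p) ℝ)).IsHermitian by
          rw [← Matrix.conjTranspose_eq_transpose_of_trivial]
          exact Matrix.isHermitian_conjTranspose_mul_self _).eigenvalues) ρ₁)
    (ϑ : ℝ) (hϑpos : 0 < ϑ)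
    (k : ℕ) (β βplus : EuclideanSpace ℝ (Fin p))
    (hβ : normZero β ≤ k)
    (hβplus : normZero βplus ≤ k)
    (hmin : ∀ γ : EuclideanSpace ℝ (Fin p), normZero γ ≤ k →
      quadApprox X y b v ϑ βplus β ≤ quadApprox X y b v ϑ γ β) :
    surrLoss X y b v βplus + 1 / 2 * (ϑ - ρ₁ * μ / n) * ‖βplus - β‖ ^ 2 ≤
      surrLoss X y b v β := by
  classical
  set M : Matrix (Fin n) (Fin p) ℝ := Matrix.of fun j i => X j i with hM
  set A : Matrix (Fin p) (Fin p) ℝ := Mᴴ * M with hA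
  set d : EuclideanSpace ℝ (Fin p) := βplus - β with hd
  set g : EuclideanSpace ℝ (Fin p) := surrGrad X y b v β with hgdef
  set θ : Fin n → ℝ := fun j => ⟪X j, β⟫ with hθ
  set δ : Fin n → ℝ := fun j => ⟪X j, d⟫ with hδdef
  have hn' : (0:ℝ) < (n:ℝ) := by exact_mod_cast hn
  -- Step 1 : minimality at β
  have hstep1 : ⟪d, g⟫ + ϑ / 2 * ‖d‖ ^ 2 ≤ 0 := by
    have h0 := hmin β hβ
    have hqb : quadApprox X y b v ϑ β β = surrLoss X y b v β := by
      simp [quadApprox, sub_self, inner_zero_left]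
    have hq : quadApprox X y b v ϑ βplus β =
        surrLoss X y b v β + ⟪d, g⟫ + ϑ / 2 * ‖d‖ ^ 2 := rfl
    rw [hq, hqb] at h0
    linarith
  -- inner products expansions
  have hθplus : ∀ j, ⟪X j, βplus⟫ = θ j + δ j := by
    intro j
    have : ⟪X j, βplus - β⟫ = ⟪X j, βplus⟫ - ⟪X j, β⟫ := inner_sub_right _ _ _
    simp only [hθ, hδdef, hd]
    linarith [this]
  have hdg : ⟪d, g⟫ = (1 / (n:ℝ)) * (∑ j, (deriv b (θ j) - y j) * δ j) - ⟪d, v⟫ := by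
    simp only [hgdef, surrGrad, inner_sub_right, real_inner_smul_right, inner_sum]
    congr 1
    congr 1
    apply Finset.sum_congr rfl
    intro j _
    have hc : (inner ℝ d (X j) : ℝ) = δ j := real_inner_comm (X j) d
    rw [hc]
  have hdv : ⟪βplus, v⟫ = ⟪β, v⟫ + ⟪d, v⟫ := by
    have : ⟪βplus - β, v⟫ = ⟪βplus, v⟫ - ⟪β, v⟫ := inner_sub_left _ _ _
    simp only [hd]
    linarith [this]
  -- Identity
  have hident : surrLoss X y b v βplus = surrLoss X y b v β + ⟪d, g⟫ +
      (1 / (n:ℝ)) * ∑ j, (b (θ j + δ j) - b (θ j) - deriv b (θ j) * δ j) := by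
    have hsum : ∑ j, (b (θ j + δ j) - y j * (θ j + δ j)) =
        ∑ j, (b (θ j) - y j * θ j) + ∑ j, (deriv b (θ j) - y j) * δ j +
          ∑ j, (b (θ j + δ j) - b (θ j) - deriv b (θ j) * δ j) := by
      rw [← Finset.sum_add_distrib, ← Finset.sum_add_distrib]
      apply Finset.sum_congr rfl
      intro j _
      ring
    simp only [surrLoss, glmLoss, hθplus, hdg, hdv, ← hθ]
    rw [hsum]
    ring
  -- Taylor bound on the remainder
  have htay : ∑ j, (b (θ j + δ j) - b (θ j) - deriv b (θ j) * δ j) ≤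
      ∑ j, μ / 2 * (δ j) ^ 2 := by
    apply Finset.sum_le_sum
    intro j _
    have := scalar_taylor b μ hb hb'' (θ j) (θ j + δ j)
    simpa using this
  -- spectral bound
  have hAherm : A.IsHermitian := Matrix.isHermitian_conjTranspose_mul_self M
  have hδvec : ∀ j, δ j = (M *ᵥ ⇑d) j := by
    intro j
    simp [hδdef, PiLp.inner_apply, RCLike.inner_apply, Matrix.mulVec, dotProduct, hM, mul_comm]
  have hsq : ∑ j, (δ j) ^ 2 = ⇑d ⬝ᵥ (A *ᵥ ⇑d) := by
    have hMT : Mᴴ = Mᵀ := Matrix.conjTranspose_eq_transpose_of_trivial M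
    have h1 : ⇑d ⬝ᵥ (A *ᵥ ⇑d) = (M *ᵥ ⇑d) ⬝ᵥ (M *ᵥ ⇑d) := by
      rw [hA, hMT, ← Matrix.mulVec_mulVec, Matrix.dotProduct_mulVec, Matrix.vecMul_transpose]
    rw [h1]
    simp only [dotProduct, pow_two, hδvec]
  have hρbound : ∀ i, hAherm.eigenvalues i ≤ ρ₁ := fun i => hρ₁.2 ⟨i, rfl⟩
  have hquad : ⇑d ⬝ᵥ (A *ᵥ ⇑d) ≤ ρ₁ * ‖d‖ ^ 2 := quad_form_le A hAherm ρ₁ hρbound d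
  -- combine
  have hsum2 : ∑ j, μ / 2 * (δ j) ^ 2 = μ / 2 * (⇑d ⬝ᵥ (A *ᵥ ⇑d)) := by
    rw [← Finset.mul_sum, hsq]
  have hstep2 : surrLoss X y b v βplus ≤ surrLoss X y b v β + ⟪d, g⟫ +
      (1 / (n:ℝ)) * (μ / 2 * (ρ₁ * ‖d‖ ^ 2)) := by
    rw [hident]
    have h3 : ∑ j, (b (θ j + δ j) - b (θ j) - deriv b (θ j) * δ j) ≤
        μ / 2 * (ρ₁ * ‖d‖ ^ 2) := by
      calc _ ≤ ∑ j, μ / 2 * (δ j) ^ 2 := htay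
      _ = μ / 2 * (⇑d ⬝ᵥ (A *ᵥ ⇑d)) := hsum2
      _ ≤ μ / 2 * (ρ₁ * ‖d‖ ^ 2) := by
          apply mul_le_mul_of_nonneg_left hquad (by linarith)
    have h4 : (0:ℝ) ≤ 1 / (n:ℝ) := by positivity
    nlinarith [h3, h4]
  have hcoef : (1 / (n:ℝ)) * (μ / 2 * (ρ₁ * ‖d‖ ^ 2)) = ρ₁ * μ / (n:ℝ) * ‖d‖ ^ 2 / 2 := by
    field_simp
  have hfinal : surrLoss X y b v βplus + 1 / 2 * (ϑ - ρ₁ * μ / n) * ‖d‖ ^ 2 ≤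
      surrLoss X y b v β := by
    rw [hcoef] at hstep2
    linarith [hstep1, hstep2]
  simpa [hd] using hfinal
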